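/- Let G be a DAG with an upstream partition V=H∪O of its vertices. Endow ℝ[a_i,b_i,λ_{ij}] with the ℤ²-multigrading deg a_h=(1,1) for h∈H, deg a_o=(1,3) for o∈O, deg b_h=(1,0) for h∈H, deg b_o=(1,3) for o∈O, deg λ_{ho}=(0,1) for h∈H, o∈O, and deg λ_{ij}=(0,0) for all other edges. Then each image φ_G(s_{ij}) is homogeneous of multidegree (1, 1+c), where c is the number of elements of the multiset {i,j} lying in O, and each image φ_G(t_{ijk}) is homogeneous of multidegree (1, c'), where c' is the number of elements of the multiset {i,j,k} lying in O; hence the multigrading descends to ℝ[s_{ij},t_{ijk}] with these degrees. -/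

import Mathlib

open MvPolynomial Matrix Finset

namespace LNG

variable {n : ℕ}

/-- A directed path in the directed graph `E`, recorded as the (nonempty) list of
visited vertices. -/
def IsDiPath (E : Fin n → Fin n → Prop) : List (Fin n) → Prop
  | [] => False
  | [_] => True
  | a :: b :: l => E a b ∧ IsDiPath E (b :: l)

/-- `p` is a directed path from `v` to `i` (possibly of length zero). -/
def IsPathFromTo (E : Fin n → Fin n → Prop) (v : Fin n) (p : List (Fin n)) (i : Fin n) : Prop :=
  IsDiPath E p ∧ p.head? = some v ∧ p.getLast? = some i

/-- A `k`-trek with top `v` between the vertices `i 0, …, i (k-1)`: an ordered collection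
of directed paths with common source `v`, where the `r`-th path has sink `i r`. -/
def IsTrek (E : Fin n → Fin n → Prop) {k : ℕ} (v : Fin n)
    (P : Fin k → List (Fin n)) (i : Fin k → Fin n) : Prop :=
  ∀ r, IsPathFromTo E v (P r) (i r)

/-- A simple `k`-trek: the top is the only vertex lying on all `k` paths. -/
def IsSimpleTrek (E : Fin n → Fin n → Prop) {k : ℕ} (v : Fin n)
    (P : Fin k → List (Fin n)) (i : Fin k → Fin n) : Prop :=
  IsTrek E v P i ∧ ∀ w : Fin n, (∀ r, w ∈ P r) → w = v

/-- A 2-trek with top `v` between `i` and `j`. -/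
def IsTrek2 (E : Fin n → Fin n → Prop) (v : Fin n) (p q : List (Fin n)) (i j : Fin n) : Prop :=
  IsPathFromTo E v p i ∧ IsPathFromTo E v q j

def IsSimpleTrek2 (E : Fin n → Fin n → Prop) (v : Fin n) (p q : List (Fin n))
    (i j : Fin n) : Prop :=
  IsTrek2 E v p q i j ∧ ∀ w : Fin n, w ∈ p → w ∈ q → w = v

/-- A 3-trek with top `v` between `i`, `j` and `k`. -/
def IsTrek3 (E : Fin n → Fin n → Prop) (v : Fin n) (p q r : List (Fin n))
    (i j k : Fin n) : Prop :=
  IsPathFromTo E v p i ∧ IsPathFromTo E v q j ∧ IsPathFromTo E v r k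

def IsSimpleTrek3 (E : Fin n → Fin n → Prop) (v : Fin n) (p q r : List (Fin n))
    (i j k : Fin n) : Prop :=
  IsTrek3 E v p q r i j k ∧ ∀ w : Fin n, w ∈ p → w ∈ q → w ∈ r → w = v

def Trek2Exists (E : Fin n → Fin n → Prop) (i j : Fin n) : Prop :=
  ∃ v p q, IsTrek2 E v p q i j

def Trek3Exists (E : Fin n → Fin n → Prop) (i j k : Fin n) : Prop :=
  ∃ v p q r, IsTrek3 E v p q r i j k

/-- The underlying undirected (simple) graph of the directed graph `E`. -/
def underlying (E : Fin n → Fin n → Prop) : SimpleGraph (Fin n) where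
  Adj a b := a ≠ b ∧ (E a b ∨ E b a)
  symm := ⟨fun a b h => ⟨h.1.symm, h.2.symm⟩⟩
  loopless := ⟨fun a h => h.1 rfl⟩

/-- A polytree: a topologically ordered DAG whose underlying undirected graph is a tree. -/
def IsPolytree (E : Fin n → Fin n → Prop) : Prop :=
  (∀ i j : Fin n, E i j → i < j) ∧ (underlying E).IsTree

/-! ### Variables of the moment polynomial ring -/

abbrev SIdx (n : ℕ) := {p : Fin n × Fin n // p.1 ≤ p.2}
abbrev TIdx (n : ℕ) := {p : Fin n × Fin n × Fin n // p.1 ≤ p.2.1 ∧ p.2.1 ≤ p.2.2}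

/-- Variables `s_{ij}` (`1 ≤ i ≤ j ≤ n`) and `t_{ijk}` (`1 ≤ i ≤ j ≤ k ≤ n`). -/
abbrev MomVar (n : ℕ) := SIdx n ⊕ TIdx n

/-- Parameter variables `a_i`, `b_i` (`i ∈ V`) and `λ_{ij}`. -/
abbrev PVar (n : ℕ) := (Fin n ⊕ Fin n) ⊕ Fin n × Fin n

/-- Median of three. -/
def mid3 (i j k : Fin n) : Fin n := max (min i j) (min (max i j) k)

lemma min3_le_mid3 (i j k : Fin n) : min i (min j k) ≤ mid3 i j k :=
  le_trans (le_min (min_le_left _ _) (le_trans (min_le_right i (min j k)) (min_le_left j k)))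
    (le_max_left _ _)

lemma mid3_le_max3 (i j k : Fin n) : mid3 i j k ≤ max i (max j k) :=
  max_le (le_trans (min_le_left i j) (le_max_left _ _))
    (le_trans (min_le_right (max i j) k) (le_trans (le_max_right j k) (le_max_right i _)))

/-- The variable `s_{ij}` (indices sorted). -/
noncomputable def svar (i j : Fin n) : MvPolynomial (MomVar n) ℝ :=
  X (Sum.inl ⟨(min i j, max i j), min_le_max⟩)

/-- The variable `t_{ijk}` (indices sorted). -/
noncomputable def tvar (i j k : Fin n) : MvPolynomial (MomVar n) ℝ :=
  X (Sum.inr ⟨(min i (min j k), mid3 i j k, max i (max j k)),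
      min3_le_mid3 i j k, mid3_le_max3 i j k⟩)

/-- Evaluation of the moment variables at a concrete pair `(S, T)`. -/
def evalVar (S : Matrix (Fin n) (Fin n) ℝ) (T : Fin n → Fin n → Fin n → ℝ) :
    MomVar n → ℝ
  | Sum.inl p => S p.1.1 p.1.2
  | Sum.inr p => T p.1.1 p.1.2.1 p.1.2.2

/-! ### The third-order moment model -/

/-- `Λ ∈ ℝ^E`. -/
def Supported (E : Fin n → Fin n → Prop) (Λ : Matrix (Fin n) (Fin n) ℝ) : Prop :=
  ∀ i j, ¬ E i j → Λ i j = 0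

/-- Covariance matrix `(I-Λ)^{-T} Ω⁽²⁾ (I-Λ)^{-1}`. -/
noncomputable def momentS (Λ : Matrix (Fin n) (Fin n) ℝ) (ω2 : Fin n → ℝ) :
    Matrix (Fin n) (Fin n) ℝ :=
  ((1 - Λ)⁻¹)ᵀ * Matrix.diagonal ω2 * (1 - Λ)⁻¹

/-- Third moment tensor `Ω⁽³⁾ ∙ (I-Λ)^{-1} ∙ (I-Λ)^{-1} ∙ (I-Λ)^{-1}`. -/
noncomputable def momentT (Λ : Matrix (Fin n) (Fin n) ℝ) (ω3 : Fin n → ℝ)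
    (i j k : Fin n) : ℝ :=
  ∑ a, ω3 a * (1 - Λ)⁻¹ a i * (1 - Λ)⁻¹ a j * (1 - Λ)⁻¹ a k

/-- Membership in the third-order moment model `M^{≤3}(G)`. -/
def MomentModel (E : Fin n → Fin n → Prop)
    (S : Matrix (Fin n) (Fin n) ℝ) (T : Fin n → Fin n → Fin n → ℝ) : Prop :=
  ∃ (Λ : Matrix (Fin n) (Fin n) ℝ) (ω2 ω3 : Fin n → ℝ),
    Supported E Λ ∧ (∀ i, 0 < ω2 i) ∧ S = momentS Λ ω2 ∧ T = momentT Λ ω3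

/-- The third-order moment (vanishing) ideal `I^{≤3}(G)`. -/
noncomputable def momentIdeal (E : Fin n → Fin n → Prop) : Ideal (MvPolynomial (MomVar n) ℝ) where
  carrier := {f | ∀ S T, MomentModel E S T → eval (evalVar S T) f = 0}
  add_mem' := by
    intro f g hf hg S T h
    simp [map_add, hf S T h, hg S T h]
  zero_mem' := by
    intro S T h
    simp
  smul_mem' := by
    intro c f hf S T h
    simp [smul_eq_mul, _root_.map_mul, hf S T h]

/-- A fully symmetric 3-tensor. -/
def SymTensor3 (T : Fin n → Fin n → Fin n → ℝ) : Prop :=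
  ∀ i j k : Fin n, T i j k = T j i k ∧ T i j k = T i k j

/-! ### Trek matrices and their minors -/

/-- `top(i,k) = top(j,k)`: there is a common vertex `v` that is the top of the
simple 2-treks between `i,k` and between `j,k`. -/
def SameTop2 (E : Fin n → Fin n → Prop) (i j k : Fin n) : Prop :=
  ∃ v, (∃ p q, IsSimpleTrek2 E v p q i k) ∧ (∃ p q, IsSimpleTrek2 E v p q j k)

/-- `top(i,l,m) = top(j,l,m)`. -/
def SameTop3 (E : Fin n → Fin n → Prop) (i j l m : Fin n) : Prop :=
  ∃ v, (∃ p q r, IsSimpleTrek3 E v p q r i l m) ∧ (∃ p q r, IsSimpleTrek3 E v p q r j l m)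

/-- `f` is a `2 × 2` minor of the trek-matrix `A_{i,j}`. -/
def IsTrekMinorOf (E : Fin n → Fin n → Prop) (i j : Fin n)
    (f : MvPolynomial (MomVar n) ℝ) : Prop :=
  (∃ k k', SameTop2 E i j k ∧ SameTop2 E i j k' ∧
      f = svar i k * svar j k' - svar j k * svar i k') ∨
  (∃ k l m, SameTop2 E i j k ∧ SameTop3 E i j l m ∧
      f = svar i k * tvar j l m - svar j k * tvar i l m) ∨
  (∃ l m l' m', SameTop3 E i j l m ∧ SameTop3 E i j l' m' ∧
      f = tvar i l m * tvar j l' m' - tvar j l m * tvar i l' m')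

/-- Variables `s_{ij}` with no 2-trek between `i,j` and `t_{ijk}` with no 3-trek. -/
def noTrekVars (E : Fin n → Fin n → Prop) : Set (MvPolynomial (MomVar n) ℝ) :=
  {f | (∃ i j, ¬ Trek2Exists E i j ∧ f = svar i j) ∨
       (∃ i j k, ¬ Trek3Exists E i j k ∧ f = tvar i j k)}

/-- The 2-minors of the trek-matrices `A_{i,j}` over edges `i → j` of `G`. -/
def edgeMinors (E : Fin n → Fin n → Prop) : Set (MvPolynomial (MomVar n) ℝ) :=
  {f | ∃ i j, E i j ∧ IsTrekMinorOf E i j f}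

/-- The 2-minors of all trek-matrices `A_{i,j}`. -/
def allMinors (E : Fin n → Fin n → Prop) : Set (MvPolynomial (MomVar n) ℝ) :=
  {f | ∃ i j, Trek2Exists E i j ∧ IsTrekMinorOf E i j f}

/-! ### The simple trek rule parametrization -/

/-- Product of the edge weights `w` along a path. -/
def pathProd {R : Type*} [CommSemiring R] (w : Fin n → Fin n → R) : List (Fin n) → R
  | [] => 1
  | [_] => 1
  | a :: b :: l => w a b * pathProd w (b :: l)

/-- Sum of a weight over all simple 2-treks between `i` and `j`. -/
noncomputable def trekSum2 {M : Type*} [AddCommMonoid M] (E : Fin n → Fin n → Prop)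
    (wt : Fin n → List (Fin n) → List (Fin n) → M) (i j : Fin n) : M :=
  ∑ᶠ τ : {x : Fin n × List (Fin n) × List (Fin n) //
      IsSimpleTrek2 E x.1 x.2.1 x.2.2 i j}, wt τ.1.1 τ.1.2.1 τ.1.2.2

/-- Sum of a weight over all simple 3-treks between `i`, `j` and `k`. -/
noncomputable def trekSum3 {M : Type*} [AddCommMonoid M] (E : Fin n → Fin n → Prop)
    (wt : Fin n → List (Fin n) → List (Fin n) → List (Fin n) → M) (i j k : Fin n) : M :=
  ∑ᶠ τ : {x : Fin n × List (Fin n) × List (Fin n) × List (Fin n) //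
      IsSimpleTrek3 E x.1 x.2.1 x.2.2.1 x.2.2.2 i j k},
    wt τ.1.1 τ.1.2.1 τ.1.2.2.1 τ.1.2.2.2

/-- The `(i,j)` coordinate of the simple trek rule parametrization `φ_G^*` (covariances). -/
noncomputable def phiS (E : Fin n → Fin n → Prop) (a : Fin n → ℝ)
    (Λ : Matrix (Fin n) (Fin n) ℝ) (i j : Fin n) : ℝ :=
  trekSum2 E (fun v p q => a v * (pathProd (fun x y => Λ x y) p * pathProd (fun x y => Λ x y) q)) i j

/-- The `(i,j,k)` coordinate of the simple trek rule parametrization `φ_G^*` (third moments). -/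
noncomputable def phiT (E : Fin n → Fin n → Prop) (b : Fin n → ℝ)
    (Λ : Matrix (Fin n) (Fin n) ℝ) (i j k : Fin n) : ℝ :=
  trekSum3 E (fun v p q r => b v * (pathProd (fun x y => Λ x y) p *
    pathProd (fun x y => Λ x y) q * pathProd (fun x y => Λ x y) r)) i j k

/-- The ring homomorphism `φ_G` of the simple trek rule. -/
noncomputable def phiG (E : Fin n → Fin n → Prop) :
    MvPolynomial (MomVar n) ℝ →ₐ[ℝ] MvPolynomial (PVar n) ℝ :=
  aeval fun v => match v with
    | Sum.inl p => trekSum2 E (fun v' pl ql =>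
        X (Sum.inl (Sum.inl v')) * (pathProd (fun x y => X (Sum.inr (x, y))) pl *
          pathProd (fun x y => X (Sum.inr (x, y))) ql)) p.1.1 p.1.2
    | Sum.inr p => trekSum3 E (fun v' pl ql rl =>
        X (Sum.inl (Sum.inr v')) * (pathProd (fun x y => X (Sum.inr (x, y))) pl *
          pathProd (fun x y => X (Sum.inr (x, y))) ql *
          pathProd (fun x y => X (Sum.inr (x, y))) rl)) p.1.1 p.1.2.1 p.1.2.2


/-- The ℤ²-multigrading on the parameter ring associated to an upstream partition
`V = H ∪ O` (here `H = Oᶜ`): `deg a_h = (1,1)`, `deg a_o = (1,3)`, `deg b_h = (1,0)`,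
`deg b_o = (1,3)`, `deg λ_{ho} = (0,1)` and `deg λ_{ij} = (0,0)` otherwise. -/
def wdeg (O : Set (Fin n)) [DecidablePred (· ∈ O)] : PVar n → ℕ × ℕ
  | Sum.inl (Sum.inl i) => if i ∈ O then (1, 3) else (1, 1)
  | Sum.inl (Sum.inr i) => if i ∈ O then (1, 3) else (1, 0)
  | Sum.inr p => if p.1 ∉ O ∧ p.2 ∈ O then (0, 1) else (0, 0)


section AuxGrading

variable {E : Fin n → Fin n → Prop} {O : Set (Fin n)} [DecidablePred (· ∈ O)]

lemma path_mem_O (hup : ∀ i j : Fin n, E i j → i ∈ O → j ∈ O) :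
    ∀ (p : List (Fin n)) (v i : Fin n), IsPathFromTo E v p i → v ∈ O → i ∈ O := by
  intro p
  induction p with
  | nil => intro v i h; exact absurd h.1 (by simp [IsDiPath])
  | cons a t ih =>
    cases t with
    | nil =>
      intro v i h hv
      obtain ⟨-, h1, h2⟩ := h
      simp only [List.head?_cons, Option.some.injEq] at h1
      simp only [List.getLast?_singleton, Option.some.injEq] at h2
      subst h1; subst h2; exact hv
    | cons b l =>
      intro v i h hv
      obtain ⟨hd, h1, h2⟩ := h
      simp only [List.head?_cons, Option.some.injEq] at h1
      rw [List.getLast?_cons_cons] at h2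
      subst h1
      simp only [IsDiPath] at hd
      exact ih b i ⟨hd.2, rfl, h2⟩ (hup _ _ hd.1 hv)

lemma pathProd_hom (hup : ∀ i j : Fin n, E i j → i ∈ O → j ∈ O) :
    ∀ (p : List (Fin n)) (v i : Fin n), IsPathFromTo E v p i →
      IsWeightedHomogeneous (wdeg O)
        (pathProd (fun x y => (X (Sum.inr (x, y)) : MvPolynomial (PVar n) ℝ)) p)
        ((0, if v ∉ O ∧ i ∈ O then 1 else 0) : ℕ × ℕ) := by
  intro p
  induction p with
  | nil => intro v i h; exact absurd h.1 (by simp [IsDiPath])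
  | cons a t ih =>
    cases t with
    | nil =>
      intro v i h
      obtain ⟨-, h1, h2⟩ := h
      simp only [List.head?_cons, Option.some.injEq] at h1
      simp only [List.getLast?_singleton, Option.some.injEq] at h2
      subst h1; subst h2
      have hz : ((0, if a ∉ O ∧ a ∈ O then 1 else 0) : ℕ × ℕ) = 0 := by
        simp [Prod.ext_iff]
      rw [hz]
      exact isWeightedHomogeneous_one ℝ _
    | cons b l =>
      intro v i h
      obtain ⟨hd, h1, h2⟩ := h
      simp only [List.head?_cons, Option.some.injEq] at h1
      rw [List.getLast?_cons_cons] at h2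
      subst h1
      simp only [IsDiPath] at hd
      have hrec := ih b i ⟨hd.2, rfl, h2⟩
      have hx := isWeightedHomogeneous_X ℝ (wdeg O) (Sum.inr (a, b) : PVar n)
      have hmul := hx.mul hrec
      have hdeg : (wdeg O (Sum.inr (a, b)) + (0, if b ∉ O ∧ i ∈ O then 1 else 0) : ℕ × ℕ)
          = ((0, if a ∉ O ∧ i ∈ O then 1 else 0) : ℕ × ℕ) := by
        by_cases hb : b ∈ O
        · have hi : i ∈ O := path_mem_O hup (b :: l) b i ⟨hd.2, rfl, h2⟩ hb
          by_cases ha : a ∈ O <;> simp [wdeg, ha, hb, hi, Prod.ext_iff]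
        · have ha : a ∉ O := fun ha => hb (hup _ _ hd.1 ha)
          simp [wdeg, ha, hb, Prod.ext_iff]
      rw [hdeg] at hmul
      exact hmul

lemma hom_finsum {ι : Type*} (w : PVar n → ℕ × ℕ) (f : ι → MvPolynomial (PVar n) ℝ)
    (m : ℕ × ℕ) (h : ∀ x, IsWeightedHomogeneous w (f x) m) :
    IsWeightedHomogeneous w (∑ᶠ x, f x) m := by
  by_cases hf : (Function.support f).Finite
  · rw [finsum_eq_sum f hf]
    exact (mem_weightedHomogeneousSubmodule ℝ w m _).1
      (Submodule.sum_mem _ (fun x _ => (mem_weightedHomogeneousSubmodule ℝ w m (f x)).2 (h x)))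
  · rw [finsum_of_infinite_support hf]
    intro d hd
    simp at hd

lemma indic2 (g : Fin n → ℕ) (i j : Fin n) : g (min i j) + g (max i j) = g i + g j := by
  rcases le_total i j with h | h
  · rw [min_eq_left h, max_eq_right h]
  · rw [min_eq_right h, max_eq_left h, Nat.add_comm]

lemma indic3 (g : Fin n → ℕ) (i j k : Fin n) :
    g (min i (min j k)) + g (mid3 i j k) + g (max i (max j k)) = g i + g j + g k := by
  simp only [mid3, min_def, max_def, Fin.le_def]
  split_ifs <;> first | ring1 | (exfalso; omega)

end AuxGrading

/-- For a DAG with an upstream partition, `φ_G(s_{ij})` is homogeneous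
of multidegree `(1, 1 + #({i,j} ∩ O))` and `φ_G(t_{ijk})` is homogeneous of multidegree
`(1, #({i,j,k} ∩ O))` (multisets counted with multiplicity). -/
theorem upstream_grading (n : ℕ) (E : Fin n → Fin n → Prop)
    (hE : ∀ i j : Fin n, E i j → i < j)
    (O : Set (Fin n)) [DecidablePred (· ∈ O)]
    (hup : ∀ i j : Fin n, E i j → i ∈ O → j ∈ O) :
    (∀ i j : Fin n,
      IsWeightedHomogeneous (wdeg O) (phiG E (svar i j))
        ((1, 1 + ((if i ∈ O then 1 else 0) + (if j ∈ O then 1 else 0))) : ℕ × ℕ)) ∧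
    (∀ i j k : Fin n,
      IsWeightedHomogeneous (wdeg O) (phiG E (tvar i j k))
        ((1, (if i ∈ O then 1 else 0) + (if j ∈ O then 1 else 0) +
          (if k ∈ O then 1 else 0)) : ℕ × ℕ)) := by
  have key2 : ∀ i j : Fin n, IsWeightedHomogeneous (wdeg O)
      (trekSum2 E (fun v' pl ql =>
        X (Sum.inl (Sum.inl v')) * (pathProd (fun x y => X (Sum.inr (x, y))) pl *
          pathProd (fun x y => (X (Sum.inr (x, y)) : MvPolynomial (PVar n) ℝ)) ql)) i j)
      ((1, 1 + ((if i ∈ O then 1 else 0) + (if j ∈ O then 1 else 0))) : ℕ × ℕ) := by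
    intro i j
    unfold trekSum2
    apply hom_finsum
    rintro ⟨⟨v, p, q⟩, ⟨⟨hp, hq⟩, -⟩⟩
    have h1 := pathProd_hom hup p v i hp
    have h2 := pathProd_hom hup q v j hq
    have hx := isWeightedHomogeneous_X ℝ (wdeg O) (Sum.inl (Sum.inl v) : PVar n)
    have hmul := hx.mul (h1.mul h2)
    have hdeg : (wdeg O (Sum.inl (Sum.inl v)) +
        ((0, if v ∉ O ∧ i ∈ O then 1 else 0) + (0, if v ∉ O ∧ j ∈ O then 1 else 0)) : ℕ × ℕ)
        = ((1, 1 + ((if i ∈ O then 1 else 0) + (if j ∈ O then 1 else 0))) : ℕ × ℕ) := by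
      by_cases hv : v ∈ O
      · have hi : i ∈ O := path_mem_O hup p v i hp hv
        have hj : j ∈ O := path_mem_O hup q v j hq hv
        simp [wdeg, hv, hi, hj, Prod.ext_iff]
      · by_cases hi : i ∈ O <;> by_cases hj : j ∈ O <;>
          simp [wdeg, hv, hi, hj, Prod.ext_iff]
    rw [hdeg] at hmul
    exact hmul
  have key3 : ∀ i j k : Fin n, IsWeightedHomogeneous (wdeg O)
      (trekSum3 E (fun v' pl ql rl =>
        X (Sum.inl (Sum.inr v')) * (pathProd (fun x y => X (Sum.inr (x, y))) pl *
          pathProd (fun x y => X (Sum.inr (x, y))) ql *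
          pathProd (fun x y => (X (Sum.inr (x, y)) : MvPolynomial (PVar n) ℝ)) rl)) i j k)
      ((1, (if i ∈ O then 1 else 0) + (if j ∈ O then 1 else 0) +
        (if k ∈ O then 1 else 0)) : ℕ × ℕ) := by
    intro i j k
    unfold trekSum3
    apply hom_finsum
    rintro ⟨⟨v, p, q, r⟩, ⟨⟨hp, hq, hr⟩, -⟩⟩
    have h1 := pathProd_hom hup p v i hp
    have h2 := pathProd_hom hup q v j hq
    have h3 := pathProd_hom hup r v k hr
    have hx := isWeightedHomogeneous_X ℝ (wdeg O) (Sum.inl (Sum.inr v) : PVar n)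
    have hmul := hx.mul ((h1.mul h2).mul h3)
    have hdeg : (wdeg O (Sum.inl (Sum.inr v)) +
        (((0, if v ∉ O ∧ i ∈ O then 1 else 0) + (0, if v ∉ O ∧ j ∈ O then 1 else 0)) +
          (0, if v ∉ O ∧ k ∈ O then 1 else 0)) : ℕ × ℕ)
        = ((1, (if i ∈ O then 1 else 0) + (if j ∈ O then 1 else 0) +
            (if k ∈ O then 1 else 0)) : ℕ × ℕ) := by
      by_cases hv : v ∈ O
      · have hi : i ∈ O := path_mem_O hup p v i hp hv
        have hj : j ∈ O := path_mem_O hup q v j hq hv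
        have hk : k ∈ O := path_mem_O hup r v k hr hv
        simp [wdeg, hv, hi, hj, hk, Prod.ext_iff]
      · by_cases hi : i ∈ O <;> by_cases hj : j ∈ O <;> by_cases hk : k ∈ O <;>
          simp [wdeg, hv, hi, hj, hk, Prod.ext_iff]
    rw [hdeg] at hmul
    exact hmul
  constructor
  · intro i j
    have h := key2 (min i j) (max i j)
    rw [indic2 (fun x => if x ∈ O then 1 else 0) i j] at h
    simpa [phiG, svar, aeval_X] using h
  · intro i j k
    have h := key3 (min i (min j k)) (mid3 i j k) (max i (max j k))
    rw [indic3 (fun x => if x ∈ O then 1 else 0) i j k] at h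
    simpa [phiG, tvar, aeval_X] using h

end LNG
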